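/- arXiv:2208.14701 — 5 statements merged into one kernel-verified Lean document; each statement's English description precedes it below -/
import Mathlib

section
/- For all φ ∈ H¹(𝒯_h) and all w ∈ X_{Γ_N}(div,Ω), one has |(𝔊(φ), w)_{𝒯_h} + (φ, div w)_{𝒯_h} − (φ, w·n)_{ℱ_h^R}| ≤ ‖φ‖_{†,1,𝒯_h} · ‖w‖_{†,div,𝒯_h}, i.e. the two mesh-dependent norms are dual to each other with respect to the broken integration-by-parts pairing. -/
noncomputable section

/-- Abstract setting for interior penalty discontinuous Galerkin (IPDG) discretizations of
Helmholtz problems.  `Elem` indexes the mesh elements `K ∈ 𝒯_h`, `FaceR` the Robin boundary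
faces `F ∈ ℱ_h^R`.  `V` plays the role of the broken Sobolev space `H¹(𝒯_h)` and `W` of
`X_{Γ_N}(div,Ω)`; `H10` is the conforming subspace `H¹_{Γ_D}(Ω) ⊆ H¹(𝒯_h)`, `Pp` the broken
polynomial space `𝒫_p(𝒯_h)` and `Wh` the BDM space `[𝒫_p(𝒯_h)]^d ∩ X_{Γ_N}(div,Ω)`.
The local quantities are: `normL2 K v = ‖v‖_K`, `normAG K v = ‖𝔊(v)‖_{A,K}` (the A-weighted
norm of the discrete/lifted gradient), `normF F v = ‖v‖_F`, `normAinv K w = ‖w‖_{A⁻¹,K}`,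
`normDiv K w = ‖div w‖_K`, `normWn F w = ‖w·n‖_F`, and the local L² pairings
`pairG K φ w = (𝔊(φ), w)_K`, `pairDiv K φ w = (φ, div w)_K`, `pairWn F φ w = (φ, w·n)_F`,
`pairMu K φ v = (μ φ, v)_K`, `pairGam F φ v = (γ φ, v)_F`, `pairAG K φ v = (A 𝔊(φ), 𝔊(v))_K`.
`sh` is the stabilization form `s_h`, `b` the continuous Helmholtz sesquilinear form and
`rhs v = (f, v)_Ω` the load functional.  The structure fields also record the standing
assumptions of the paper: positivity of the mesh/coefficient data, (semi)norm axioms,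
local Cauchy–Schwarz inequalities, sesquilinearity, vanishing of `s_h` on conforming
arguments, the conforming and discrete integration-by-parts identities for the discrete
gradient, and consistency of the continuous form. -/
structure DG where
  Elem : Type
  FaceR : Type
  [finElem : Fintype Elem]
  [finFaceR : Fintype FaceR]
  V : Type
  W : Type
  [acgV : AddCommGroup V]
  [modV : Module ℂ V]
  [acgW : AddCommGroup W]
  [modW : Module ℂ W]
  H10 : Submodule ℂ V
  Pp : Submodule ℂ V
  Wh : Submodule ℂ W
  ω : ℝ
  ω_pos : 0 < ω
  hK : Elem → ℝ
  αK : Elem → ℝ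
  μK : Elem → ℝ
  hF : FaceR → ℝ
  αF : FaceR → ℝ
  γF : FaceR → ℝ
  hK_pos : ∀ K, 0 < hK K
  αK_pos : ∀ K, 0 < αK K
  μK_pos : ∀ K, 0 < μK K
  hF_pos : ∀ F, 0 < hF F
  αF_pos : ∀ F, 0 < αF F
  γF_pos : ∀ F, 0 < γF F
  normL2 : Elem → V → ℝ
  normAG : Elem → V → ℝ
  normF : FaceR → V → ℝ
  normAinv : Elem → W → ℝ
  normDiv : Elem → W → ℝ
  normWn : FaceR → W → ℝ
  normL2_nonneg : ∀ K v, 0 ≤ normL2 K v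
  normAG_nonneg : ∀ K v, 0 ≤ normAG K v
  normF_nonneg : ∀ F v, 0 ≤ normF F v
  normAinv_nonneg : ∀ K w, 0 ≤ normAinv K w
  normDiv_nonneg : ∀ K w, 0 ≤ normDiv K w
  normWn_nonneg : ∀ F w, 0 ≤ normWn F w
  normL2_add : ∀ K u v, normL2 K (u + v) ≤ normL2 K u + normL2 K v
  normL2_smul : ∀ K (c : ℂ) v, normL2 K (c • v) = ‖c‖ * normL2 K v
  normF_add : ∀ F u v, normF F (u + v) ≤ normF F u + normF F v
  normF_smul : ∀ F (c : ℂ) v, normF F (c • v) = ‖c‖ * normF F v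
  pairG : Elem → V → W → ℂ
  pairDiv : Elem → V → W → ℂ
  pairWn : FaceR → V → W → ℂ
  pairMu : Elem → V → V → ℂ
  pairGam : FaceR → V → V → ℂ
  pairAG : Elem → V → V → ℂ
  sh : V → V → ℂ
  b : V → V → ℂ
  rhs : V → ℂ
  pairG_sub_left : ∀ K u v w, pairG K (u - v) w = pairG K u w - pairG K v w
  pairG_sub_right : ∀ K u w w', pairG K u (w - w') = pairG K u w - pairG K u w'
  pairDiv_sub_left : ∀ K u v w, pairDiv K (u - v) w = pairDiv K u w - pairDiv K v w
  pairDiv_sub_right : ∀ K u w w', pairDiv K u (w - w') = pairDiv K u w - pairDiv K u w'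
  pairWn_sub_left : ∀ F u v w, pairWn F (u - v) w = pairWn F u w - pairWn F v w
  pairWn_sub_right : ∀ F u w w', pairWn F u (w - w') = pairWn F u w - pairWn F u w'
  pairMu_sub_left : ∀ K u v r, pairMu K (u - v) r = pairMu K u r - pairMu K v r
  pairMu_sub_right : ∀ K u v r, pairMu K u (v - r) = pairMu K u v - pairMu K u r
  pairGam_sub_left : ∀ F u v r, pairGam F (u - v) r = pairGam F u r - pairGam F v r
  pairGam_sub_right : ∀ F u v r, pairGam F u (v - r) = pairGam F u v - pairGam F u r
  pairAG_sub_left : ∀ K u v r, pairAG K (u - v) r = pairAG K u r - pairAG K v r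
  pairAG_sub_right : ∀ K u v r, pairAG K u (v - r) = pairAG K u v - pairAG K u r
  sh_sub_left : ∀ u v r, sh (u - v) r = sh u r - sh v r
  sh_sub_right : ∀ u v r, sh u (v - r) = sh u v - sh u r
  pairMu_symm : ∀ K u v, pairMu K u v = starRingEnd ℂ (pairMu K v u)
  pairGam_symm : ∀ F u v, pairGam F u v = starRingEnd ℂ (pairGam F v u)
  pairAG_symm : ∀ K u v, pairAG K u v = starRingEnd ℂ (pairAG K v u)
  csG : ∀ K φ w, ‖pairG K φ w‖ ≤ normAG K φ * normAinv K w
  csDiv : ∀ K φ w, ‖pairDiv K φ w‖ ≤ normL2 K φ * normDiv K w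
  csWn : ∀ F φ w, ‖pairWn F φ w‖ ≤ normF F φ * normWn F w
  csMu : ∀ K φ v, ‖pairMu K φ v‖ ≤ μK K * (normL2 K φ * normL2 K v)
  csGam : ∀ F φ v, ‖pairGam F φ v‖ ≤ γF F * (normF F φ * normF F v)
  csAG : ∀ K φ v, ‖pairAG K φ v‖ ≤ normAG K φ * normAG K v
  pairMu_self : ∀ K v, pairMu K v v = ((μK K * normL2 K v ^ 2 : ℝ) : ℂ)
  pairGam_self : ∀ F v, pairGam F v v = ((γF F * normF F v ^ 2 : ℝ) : ℂ)
  pairAG_self : ∀ K v, pairAG K v v = ((normAG K v ^ 2 : ℝ) : ℂ)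
  sh_conf : ∀ u v, u ∈ H10 ∨ v ∈ H10 → sh u v = 0
  ibp_conf : ∀ u ∈ H10, ∀ w : W,
    (∑ K : Elem, (pairG K u w + pairDiv K u w)) = ∑ F : FaceR, pairWn F u w
  ibp_disc : ∀ u : V, ∀ w ∈ Wh,
    (∑ K : Elem, (pairG K u w + pairDiv K u w)) = ∑ F : FaceR, pairWn F u w
  consistency : ∀ u ∈ H10, ∀ v ∈ H10,
    b u v = -((ω ^ 2 : ℝ) : ℂ) * (∑ K : Elem, pairMu K u v)
      - Complex.I * (ω : ℂ) * (∑ F : FaceR, pairGam F u v)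
      + ∑ K : Elem, pairAG K u v

attribute [instance] DG.finElem DG.finFaceR DG.acgV DG.modV DG.acgW DG.modW

namespace DG

variable (C : DG)

/-- `ϑ_K := √(α_K/μ_K)`. -/
def thetaK (K : C.Elem) : ℝ := Real.sqrt (C.αK K / C.μK K)

/-- `ϑ_F := α_F/γ_F`. -/
def thetaF (F : C.FaceR) : ℝ := C.αF F / C.γF F

/-- The square of the mesh-dependent norm `‖v‖_{†,1,𝒯_h}`. -/
def dag1Sq (v : C.V) : ℝ :=
  (∑ K : C.Elem, (max 1 (C.ω ^ 2 * C.hK K ^ 2 / C.thetaK K ^ 2) * (C.αK K / C.hK K ^ 2) *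
      C.normL2 K v ^ 2 + C.normAG K v ^ 2))
  + ∑ F : C.FaceR, max 1 (C.ω * C.hF F / C.thetaF F) * (C.αF F / C.hF F) * C.normF F v ^ 2

/-- The mesh-dependent norm `‖v‖_{†,1,𝒯_h}`. -/
def dag1 (v : C.V) : ℝ := Real.sqrt (C.dag1Sq v)

/-- The square of the mesh-dependent norm `‖w‖_{†,div,𝒯_h}`. -/
def dagDivSq (w : C.W) : ℝ :=
  (∑ K : C.Elem, (C.normAinv K w ^ 2 + C.hK K ^ 2 / C.αK K * C.normDiv K w ^ 2))
  + ∑ F : C.FaceR, C.hF F / C.αF F * C.normWn F w ^ 2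

/-- The mesh-dependent norm `‖w‖_{†,div,𝒯_h}`. -/
def dagDiv (w : C.W) : ℝ := Real.sqrt (C.dagDivSq w)

/-- The square of the broken energy norm `|||v|||_{ω,𝒯_h}`. -/
def enormSq (v : C.V) : ℝ :=
  (∑ K : C.Elem, (C.ω ^ 2 * C.μK K * C.normL2 K v ^ 2 + C.normAG K v ^ 2))
  + ∑ F : C.FaceR, C.ω * C.γF F * C.normF F v ^ 2

/-- The broken energy norm `|||v|||_{ω,𝒯_h}`. -/
def enorm (v : C.V) : ℝ := Real.sqrt (C.enormSq v)

/-- `‖v‖_{μ,𝒯_h}`. -/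
def normMuT (v : C.V) : ℝ := Real.sqrt (∑ K : C.Elem, C.μK K * C.normL2 K v ^ 2)

/-- `‖v‖_{γ,ℱ_h^R}`. -/
def normGamR (v : C.V) : ℝ := Real.sqrt (∑ F : C.FaceR, C.γF F * C.normF F v ^ 2)

/-- `‖𝔊(v)‖_{A,𝒯_h}`; for conforming `v` this is `‖∇v‖_{A,Ω}`. -/
def normAgrad (v : C.V) : ℝ := Real.sqrt (∑ K : C.Elem, C.normAG K v ^ 2)

/-- `‖div w‖_Ω`. -/
def normDivT (w : C.W) : ℝ := Real.sqrt (∑ K : C.Elem, C.normDiv K w ^ 2)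

/-- The broken integration-by-parts pairing
`(𝔊(φ), w)_{𝒯_h} + (φ, div w)_{𝒯_h} − (φ, w·n)_{ℱ_h^R}`. -/
def pairB (φ : C.V) (w : C.W) : ℂ :=
  (∑ K : C.Elem, (C.pairG K φ w + C.pairDiv K φ w)) - ∑ F : C.FaceR, C.pairWn F φ w

/-- `(μ φ, v)_{𝒯_h}`. -/
def muPair (φ v : C.V) : ℂ := ∑ K : C.Elem, C.pairMu K φ v

/-- `(γ φ, v)_{ℱ_h^R}`. -/
def gamPair (φ v : C.V) : ℂ := ∑ F : C.FaceR, C.pairGam F φ v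

/-- `(A 𝔊(φ), 𝔊(v))_{𝒯_h}`. -/
def agPair (φ v : C.V) : ℂ := ∑ K : C.Elem, C.pairAG K φ v

/-- The IPDG form `a_h(φ,v) := (A𝔊(φ), 𝔊(v))_{𝒯_h} + s_h(φ,v)`. -/
def ah (φ v : C.V) : ℂ := C.agPair φ v + C.sh φ v

/-- The discrete Helmholtz form
`b_h(φ,v) := −ω²(μφ,v)_{𝒯_h} − iω(γφ,v)_{ℱ_h^R} + a_h(φ,v)`. -/
def bh (φ v : C.V) : ℂ :=
  -((C.ω ^ 2 : ℝ) : ℂ) * C.muPair φ v - Complex.I * (C.ω : ℂ) * C.gamPair φ v + C.ah φ v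

/-- The positive Hermitian counterpart
`b_h^+(φ,v) := ω²(μφ,v)_{𝒯_h} + ω(γφ,v)_{ℱ_h^R} + (A𝔊(φ),𝔊(v))_{𝒯_h}`. -/
def bhp (φ v : C.V) : ℂ :=
  ((C.ω ^ 2 : ℝ) : ℂ) * C.muPair φ v + (C.ω : ℂ) * C.gamPair φ v + C.agPair φ v

/-- `Repr v σ` expresses that `σ = A∇v ∈ X_{Γ_N}(div,Ω)`, through the identity
`(A𝔊(φ), 𝔊(v))_{𝒯_h} = (𝔊(φ), A∇v)_{𝒯_h}` for all broken `φ`. -/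
def Repr (v : C.V) (σ : C.W) : Prop := ∀ φ : C.V, C.agPair φ v = ∑ K : C.Elem, C.pairG K φ σ

/-- `u` is the exact solution: `u ∈ H¹_{Γ_D}(Ω)` and `b(u,v) = (f,v)_Ω` for all
`v ∈ H¹_{Γ_D}(Ω)`. -/
def IsExactSol (u : C.V) : Prop := u ∈ C.H10 ∧ ∀ v ∈ C.H10, C.b u v = C.rhs v

/-- `uh` solves the IPDG equations: `uh ∈ 𝒫_p(𝒯_h)` and `b_h(uh,v_h) = (f,v_h)_{𝒯_h}`
for all `v_h ∈ 𝒫_p(𝒯_h)`. -/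
def IsDiscreteSol (uh : C.V) : Prop := uh ∈ C.Pp ∧ ∀ v ∈ C.Pp, C.bh uh v = C.rhs v

/-- `πg` is the `‖·‖_{†,1,𝒯_h}`-best approximation onto `H¹_{Γ_D}(Ω)`. -/
def IsPig (πg : C.V → C.V) : Prop :=
  ∀ v, πg v ∈ C.H10 ∧ ∀ s ∈ C.H10, C.dag1 (v - πg v) ≤ C.dag1 (v - s)

/-- `π` is the `‖·‖_{†,1,𝒯_h}`-best approximation onto the Lagrange space
`𝒫_p(𝒯_h) ∩ H¹_{Γ_D}(Ω)`. -/
def IsPihg (π : C.V → C.V) : Prop :=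
  ∀ v, π v ∈ C.Pp ⊓ C.H10 ∧ ∀ s ∈ C.Pp ⊓ C.H10, C.dag1 (v - π v) ≤ C.dag1 (v - s)

/-- `π` is the `‖·‖_{†,div,𝒯_h}`-best approximation onto the BDM space
`[𝒫_p(𝒯_h)]^d ∩ X_{Γ_N}(div,Ω)`. -/
def IsPihd (π : C.W → C.W) : Prop :=
  ∀ w, π w ∈ C.Wh ∧ ∀ s ∈ C.Wh, C.dagDiv (w - π w) ≤ C.dagDiv (w - s)

/-- `dual ψ = u*_ψ` is the volume dual solution, `b(w, u*_ψ) = ω(μ w, ψ)_Ω` for all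
conforming `w`, and `Adual ψ = A∇u*_ψ ∈ X_{Γ_N}(div,Ω)`. -/
def IsVolDual (dual : C.V → C.V) (Adual : C.V → C.W) : Prop :=
  ∀ ψ : C.V, dual ψ ∈ C.H10 ∧
    (∀ w ∈ C.H10, C.b w (dual ψ) = (C.ω : ℂ) * C.muPair w ψ) ∧
    C.Repr (dual ψ) (Adual ψ)

/-- `dual Ψ = U*_Ψ` is the Robin-boundary dual solution,
`b(w, U*_Ψ) = ω^{1/2}(γ w, Ψ)_{Γ_R}`, and `Adual Ψ = A∇U*_Ψ`. -/
def IsRobDual (dual : C.V → C.V) (Adual : C.V → C.W) : Prop :=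
  ∀ ψ : C.V, dual ψ ∈ C.H10 ∧
    (∀ w ∈ C.H10, C.b w (dual ψ) = ((Real.sqrt C.ω : ℝ) : ℂ) * C.gamPair w ψ) ∧
    C.Repr (dual ψ) (Adual ψ)

/-- `γg` and `γd` are upper bounds for the volume approximation factors
`γ̌_{ba,g}` and `γ̌_{ba,d}`. -/
def VolFactors (dual : C.V → C.V) (Adual : C.V → C.W) (πhg : C.V → C.V) (πhd : C.W → C.W)
    (γg γd : ℝ) : Prop :=
  ∀ ψ : C.V, C.dag1 (dual ψ - πhg (dual ψ)) ≤ γg * C.normMuT ψ ∧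
    C.dagDiv (Adual ψ - πhd (Adual ψ)) ≤ γd * C.normMuT ψ

/-- `γg` and `γd` are upper bounds for the Robin approximation factors
`γ̃_{ba,g}` and `γ̃_{ba,d}`. -/
def RobFactors (dual : C.V → C.V) (Adual : C.V → C.W) (πhg : C.V → C.V) (πhd : C.W → C.W)
    (γg γd : ℝ) : Prop :=
  ∀ ψ : C.V, C.dag1 (dual ψ - πhg (dual ψ)) ≤ γg * C.normGamR ψ ∧
    C.dagDiv (Adual ψ - πhd (Adual ψ)) ≤ γd * C.normGamR ψ

/-- The conforming residual norm
`R_r := sup{ |b_h(u−u_h, v)| : v ∈ H¹_{Γ_D}(Ω), ‖∇v‖_{A,Ω} = 1 }`. -/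
def Rr (u uh : C.V) : ℝ :=
  sSup {r : ℝ | ∃ v ∈ C.H10, C.normAgrad v = 1 ∧ r = ‖C.bh (u - uh) v‖}

/-- The non-conformity measure `R_c := ‖u_h − π^g u_h‖_{†,1,𝒯_h}`. -/
def Rc (πg : C.V → C.V) (uh : C.V) : ℝ := C.dag1 (uh - πg uh)

/-- The total abstract estimator `R := (R_r² + R_c²)^{1/2}`. -/
def Rtot (πg : C.V → C.V) (u uh : C.V) : ℝ :=
  Real.sqrt (C.Rr u uh ^ 2 + C.Rc πg uh ^ 2)

/-- `ω h_F^⋆/ϑ_F^⋆ := max_{F ∈ ℱ_h^R} ω h_F/ϑ_F`. -/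
def ratioFstar : ℝ := ⨆ F : C.FaceR, C.ω * C.hF F / C.thetaF F

/-- `ω h_K^⋆/ϑ_K^⋆ := max_{K ∈ 𝒯_h} ω h_K/ϑ_K`. -/
def ratioKstar : ℝ := ⨆ K : C.Elem, C.ω * C.hK K / C.thetaK K

end DG

/-- duality of the mesh-dependent norms, eq. (2.4) of the paper:
for all `φ ∈ H¹(𝒯_h)` and `w ∈ X_{Γ_N}(div,Ω)`,
`|(𝔊(φ), w)_{𝒯_h} + (φ, div w)_{𝒯_h} − (φ, w·n)_{ℱ_h^R}| ≤ ‖φ‖_{†,1,𝒯_h} ‖w‖_{†,div,𝒯_h}`. -/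
theorem dagger_norm_duality (C : DG) (φ : C.V) (w : C.W) :
    ‖C.pairB φ w‖ ≤ C.dag1 φ * C.dagDiv w := by
  classical
  set a : C.Elem ⊕ C.Elem ⊕ C.FaceR → ℝ := fun i =>
    match i with
    | .inl K => C.normAG K φ
    | .inr (.inl K) => Real.sqrt (C.αK K / C.hK K ^ 2) * C.normL2 K φ
    | .inr (.inr F) => Real.sqrt (C.αF F / C.hF F) * C.normF F φ with ha
  set b : C.Elem ⊕ C.Elem ⊕ C.FaceR → ℝ := fun i =>
    match i with
    | .inl K => C.normAinv K w
    | .inr (.inl K) => Real.sqrt (C.hK K ^ 2 / C.αK K) * C.normDiv K w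
    | .inr (.inr F) => Real.sqrt (C.hF F / C.αF F) * C.normWn F w with hb
  have h1 : ‖C.pairB φ w‖ ≤ ∑ i, a i * b i := by
    have hab1 : ∀ K : C.Elem, a (.inr (.inl K)) * b (.inr (.inl K)) =
        C.normL2 K φ * C.normDiv K w := by
      intro K
      have h1 : (0:ℝ) < C.αK K / C.hK K ^ 2 :=
        div_pos (C.αK_pos K) (by have := C.hK_pos K; positivity)
      simp only [ha, hb]
      rw [show Real.sqrt (C.αK K / C.hK K ^ 2) * C.normL2 K φ *
          (Real.sqrt (C.hK K ^ 2 / C.αK K) * C.normDiv K w) =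
          (Real.sqrt (C.αK K / C.hK K ^ 2) * Real.sqrt (C.hK K ^ 2 / C.αK K)) *
            (C.normL2 K φ * C.normDiv K w) by ring,
        ← Real.sqrt_mul h1.le]
      rw [show C.αK K / C.hK K ^ 2 * (C.hK K ^ 2 / C.αK K) = 1 by
        have h2 := (C.αK_pos K).ne'
        have h3 := (C.hK_pos K).ne'
        field_simp]
      simp
    have hab2 : ∀ F : C.FaceR, a (.inr (.inr F)) * b (.inr (.inr F)) =
        C.normF F φ * C.normWn F w := by
      intro F
      have h1 : (0:ℝ) < C.αF F / C.hF F := div_pos (C.αF_pos F) (C.hF_pos F)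
      simp only [ha, hb]
      rw [show Real.sqrt (C.αF F / C.hF F) * C.normF F φ *
          (Real.sqrt (C.hF F / C.αF F) * C.normWn F w) =
          (Real.sqrt (C.αF F / C.hF F) * Real.sqrt (C.hF F / C.αF F)) *
            (C.normF F φ * C.normWn F w) by ring,
        ← Real.sqrt_mul h1.le]
      rw [show C.αF F / C.hF F * (C.hF F / C.αF F) = 1 by
        have h2 := (C.αF_pos F).ne'
        have h3 := (C.hF_pos F).ne'
        field_simp]
      simp
    have key : (∑ i, a i * b i) =
        (∑ K : C.Elem, (a (.inl K) * b (.inl K) +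
          a (.inr (.inl K)) * b (.inr (.inl K)))) +
        ∑ F : C.FaceR, a (.inr (.inr F)) * b (.inr (.inr F)) := by
      rw [Fintype.sum_sum_type, Fintype.sum_sum_type, Finset.sum_add_distrib]
      ring
    rw [key]
    calc ‖C.pairB φ w‖
        ≤ ‖∑ K : C.Elem, (C.pairG K φ w + C.pairDiv K φ w)‖ +
          ‖∑ F : C.FaceR, C.pairWn F φ w‖ := norm_sub_le _ _
      _ ≤ (∑ K : C.Elem, ‖C.pairG K φ w + C.pairDiv K φ w‖) +
          ∑ F : C.FaceR, ‖C.pairWn F φ w‖ := by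
            gcongr <;> exact norm_sum_le _ _
      _ ≤ _ := by
            gcongr with K _ F
            · calc ‖C.pairG K φ w + C.pairDiv K φ w‖
                  ≤ ‖C.pairG K φ w‖ + ‖C.pairDiv K φ w‖ := norm_add_le _ _
                _ ≤ _ := by
                    rw [hab1]
                    exact add_le_add (C.csG K φ w) (C.csDiv K φ w)
            · rw [hab2]; exact C.csWn F φ w
  have h2 : (∑ i, a i * b i) ≤
      Real.sqrt (∑ i, a i ^ 2) * Real.sqrt (∑ i, b i ^ 2) :=
    Real.sum_mul_le_sqrt_mul_sqrt _ _ _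
  have hA : (∑ i, a i ^ 2) ≤ C.dag1Sq φ := by
    have key : (∑ i, a i ^ 2) =
        (∑ K : C.Elem, (a (.inr (.inl K)) ^ 2 + a (.inl K) ^ 2)) +
        ∑ F : C.FaceR, a (.inr (.inr F)) ^ 2 := by
      rw [Fintype.sum_sum_type, Fintype.sum_sum_type, Finset.sum_add_distrib]
      ring
    rw [key, DG.dag1Sq]
    gcongr with K _ F
    · have hx : (0:ℝ) ≤ C.αK K / C.hK K ^ 2 :=
        le_of_lt (div_pos (C.αK_pos K) (by have := C.hK_pos K; positivity))
      simp only [ha, mul_pow, Real.sq_sqrt hx]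
      have hle : C.αK K / C.hK K ^ 2 * C.normL2 K φ ^ 2 ≤
          max 1 (C.ω ^ 2 * C.hK K ^ 2 / C.thetaK K ^ 2) *
            (C.αK K / C.hK K ^ 2 * C.normL2 K φ ^ 2) := by
        refine le_mul_of_one_le_left ?_ (le_max_left _ _)
        have := C.normL2_nonneg K φ
        positivity
      nlinarith [hle]
    · have hx : (0:ℝ) ≤ C.αF F / C.hF F :=
        le_of_lt (div_pos (C.αF_pos F) (C.hF_pos F))
      simp only [ha, mul_pow, Real.sq_sqrt hx]
      have hle : C.αF F / C.hF F * C.normF F φ ^ 2 ≤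
          max 1 (C.ω * C.hF F / C.thetaF F) *
            (C.αF F / C.hF F * C.normF F φ ^ 2) := by
        refine le_mul_of_one_le_left ?_ (le_max_left _ _)
        have := C.normF_nonneg F φ
        positivity
      nlinarith [hle]
  have hB : (∑ i, b i ^ 2) = C.dagDivSq w := by
    rw [Fintype.sum_sum_type, Fintype.sum_sum_type, DG.dagDivSq,
      ← add_assoc, ← Finset.sum_add_distrib]
    congr 1
    · refine Finset.sum_congr rfl fun K _ => ?_
      have hx : (0:ℝ) ≤ C.hK K ^ 2 / C.αK K :=
        le_of_lt (div_pos (by have := C.hK_pos K; positivity) (C.αK_pos K))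
      simp only [hb, mul_pow, Real.sq_sqrt hx]
    · refine Finset.sum_congr rfl fun F _ => ?_
      have hx : (0:ℝ) ≤ C.hF F / C.αF F :=
        le_of_lt (div_pos (C.hF_pos F) (C.αF_pos F))
      simp only [hb, mul_pow, Real.sq_sqrt hx]
  calc ‖C.pairB φ w‖ ≤ Real.sqrt (∑ i, a i ^ 2) * Real.sqrt (∑ i, b i ^ 2) :=
        h1.trans h2
    _ ≤ C.dag1 φ * C.dagDiv w := by
        rw [DG.dag1, DG.dagDiv, hB]
        exact mul_le_mul_of_nonneg_right (Real.sqrt_le_sqrt hA)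
          (Real.sqrt_nonneg _)
end
end

section
/- (Lifting error) For all φ ∈ H¹(𝒯_h), σ ∈ X_{Γ_N}(div,Ω), φ̃ ∈ H¹_{Γ_D}(Ω), and σ_h ∈ [𝒫_p(𝒯_h)]^d ∩ X_{Γ_N}(div,Ω), the identity (𝔊(φ), σ)_{𝒯_h} + (φ, div σ)_{𝒯_h} − (φ, σ·n)_{ℱ_h^R} = (𝔊(φ−φ̃), σ−σ_h)_{𝒯_h} + (φ−φ̃, div(σ−σ_h))_{𝒯_h} − (φ−φ̃, (σ−σ_h)·n)_{ℱ_h^R} holds, and consequently |(𝔊(φ), σ)_{𝒯_h} + (φ, div σ)_{𝒯_h} − (φ, σ·n)_{ℱ_h^R}| ≤ ‖φ−φ̃‖_{†,1,𝒯_h} · ‖σ−σ_h‖_{†,div,𝒯_h}. -/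
noncomputable section

/-- Lemma 3.1, lifting error: for all `φ ∈ H¹(𝒯_h)`,
`σ ∈ X_{Γ_N}(div,Ω)`, `φ̃ ∈ H¹_{Γ_D}(Ω)` and `σ_h ∈ [𝒫_p(𝒯_h)]^d ∩ X_{Γ_N}(div,Ω)`,
the identity
`(𝔊(φ),σ)_{𝒯_h} + (φ,div σ)_{𝒯_h} − (φ,σ·n)_{ℱ_h^R}
  = (𝔊(φ−φ̃),σ−σ_h)_{𝒯_h} + (φ−φ̃,div(σ−σ_h))_{𝒯_h} − (φ−φ̃,(σ−σ_h)·n)_{ℱ_h^R}`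
holds, and consequently the left-hand side is bounded by
`‖φ−φ̃‖_{†,1,𝒯_h} ‖σ−σ_h‖_{†,div,𝒯_h}`. -/
theorem lifting_error (C : DG) (φ : C.V) (σ : C.W)
    (φt : C.V) (hφt : φt ∈ C.H10) (σh : C.W) (hσh : σh ∈ C.Wh) :
    C.pairB φ σ = C.pairB (φ - φt) (σ - σh) ∧
    ‖C.pairB φ σ‖ ≤ C.dag1 (φ - φt) * C.dagDiv (σ - σh) := by
  have hconf : ∀ w : C.W, C.pairB φt w = 0 := fun w => by
    simp [DG.pairB, C.ibp_conf φt hφt w]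
  have hdisc : ∀ u : C.V, C.pairB u σh = 0 := fun u => by
    simp [DG.pairB, C.ibp_disc u σh hσh]
  have hsub : C.pairB (φ - φt) (σ - σh)
      = C.pairB φ σ - C.pairB φ σh - C.pairB φt σ + C.pairB φt σh := by
    simp only [DG.pairB, C.pairG_sub_left, C.pairG_sub_right, C.pairDiv_sub_left,
      C.pairDiv_sub_right, C.pairWn_sub_left, C.pairWn_sub_right, Finset.sum_sub_distrib,
      Finset.sum_add_distrib]
    ring
  have hid : C.pairB φ σ = C.pairB (φ - φt) (σ - σh) := by
    rw [hsub, hconf, hdisc, hconf]; ring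
  refine ⟨hid, ?_⟩
  rw [hid]
  set ψ := φ - φt with hψ
  set τ := σ - σh with hτ
  set w1 : C.Elem → ℝ :=
    fun K => max 1 (C.ω ^ 2 * C.hK K ^ 2 / C.thetaK K ^ 2) * (C.αK K / C.hK K ^ 2) with hw1
  set wF : C.FaceR → ℝ :=
    fun F => max 1 (C.ω * C.hF F / C.thetaF F) * (C.αF F / C.hF F) with hwF
  have hw1nn : ∀ K, 0 ≤ w1 K := fun K => by
    have := C.hK_pos K; have := C.αK_pos K
    exact mul_nonneg (le_trans zero_le_one (le_max_left _ _)) (by positivity)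
  have hwFnn : ∀ F, 0 ≤ wF F := fun F => by
    have := C.hF_pos F; have := C.αF_pos F
    exact mul_nonneg (le_trans zero_le_one (le_max_left _ _)) (by positivity)
  -- Step 1: triangle inequality plus local Cauchy–Schwarz
  have step1 : ‖C.pairB ψ τ‖ ≤
      (∑ K : C.Elem, (C.normAG K ψ * C.normAinv K τ + C.normL2 K ψ * C.normDiv K τ))
      + ∑ F : C.FaceR, C.normF F ψ * C.normWn F τ := by
    refine (norm_sub_le _ _).trans (add_le_add ?_ ?_)
    · exact (norm_sum_le _ _).trans (Finset.sum_le_sum fun K _ =>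
        (norm_add_le _ _).trans (add_le_add (C.csG K ψ τ) (C.csDiv K ψ τ)))
    · exact (norm_sum_le _ _).trans (Finset.sum_le_sum fun F _ => C.csWn F ψ τ)
  -- Step 2: weight insertion (products of weights are ≥ 1)
  have hwK : ∀ K : C.Elem, C.normL2 K ψ * C.normDiv K τ ≤
      (Real.sqrt (w1 K) * C.normL2 K ψ) *
        (Real.sqrt (C.hK K ^ 2 / C.αK K) * C.normDiv K τ) := by
    intro K
    have hh := C.hK_pos K
    have ha := C.αK_pos K
    have hprod : w1 K * (C.hK K ^ 2 / C.αK K)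
        = max 1 (C.ω ^ 2 * C.hK K ^ 2 / C.thetaK K ^ 2) := by
      rw [hw1]; field_simp
    have h1 : 1 ≤ Real.sqrt (w1 K) * Real.sqrt (C.hK K ^ 2 / C.αK K) := by
      rw [← Real.sqrt_mul (hw1nn K), hprod]
      exact Real.one_le_sqrt.mpr (le_max_left _ _)
    calc C.normL2 K ψ * C.normDiv K τ = 1 * (C.normL2 K ψ * C.normDiv K τ) := by ring
      _ ≤ (Real.sqrt (w1 K) * Real.sqrt (C.hK K ^ 2 / C.αK K)) *
            (C.normL2 K ψ * C.normDiv K τ) :=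
          mul_le_mul_of_nonneg_right h1
            (mul_nonneg (C.normL2_nonneg K ψ) (C.normDiv_nonneg K τ))
      _ = _ := by ring
  have hwR : ∀ F : C.FaceR, C.normF F ψ * C.normWn F τ ≤
      (Real.sqrt (wF F) * C.normF F ψ) *
        (Real.sqrt (C.hF F / C.αF F) * C.normWn F τ) := by
    intro F
    have hh := C.hF_pos F
    have ha := C.αF_pos F
    have hprod : wF F * (C.hF F / C.αF F) = max 1 (C.ω * C.hF F / C.thetaF F) := by
      rw [hwF]; field_simp
    have h1 : 1 ≤ Real.sqrt (wF F) * Real.sqrt (C.hF F / C.αF F) := by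
      rw [← Real.sqrt_mul (hwFnn F), hprod]
      exact Real.one_le_sqrt.mpr (le_max_left _ _)
    calc C.normF F ψ * C.normWn F τ = 1 * (C.normF F ψ * C.normWn F τ) := by ring
      _ ≤ (Real.sqrt (wF F) * Real.sqrt (C.hF F / C.αF F)) *
            (C.normF F ψ * C.normWn F τ) :=
          mul_le_mul_of_nonneg_right h1
            (mul_nonneg (C.normF_nonneg F ψ) (C.normWn_nonneg F τ))
      _ = _ := by ring
  -- abbreviations for the six squared sums
  set A1 : ℝ := ∑ K : C.Elem, w1 K * C.normL2 K ψ ^ 2 with hA1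
  set A2 : ℝ := ∑ K : C.Elem, C.normAG K ψ ^ 2 with hA2
  set A3 : ℝ := ∑ F : C.FaceR, wF F * C.normF F ψ ^ 2 with hA3
  set B1 : ℝ := ∑ K : C.Elem, C.hK K ^ 2 / C.αK K * C.normDiv K τ ^ 2 with hB1
  set B2 : ℝ := ∑ K : C.Elem, C.normAinv K τ ^ 2 with hB2
  set B3 : ℝ := ∑ F : C.FaceR, C.hF F / C.αF F * C.normWn F τ ^ 2 with hB3
  have hA1nn : 0 ≤ A1 := Finset.sum_nonneg fun K _ => mul_nonneg (hw1nn K) (sq_nonneg _)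
  have hA2nn : 0 ≤ A2 := Finset.sum_nonneg fun K _ => sq_nonneg _
  have hA3nn : 0 ≤ A3 := Finset.sum_nonneg fun F _ => mul_nonneg (hwFnn F) (sq_nonneg _)
  have hB1nn : 0 ≤ B1 := Finset.sum_nonneg fun K _ => by
    have := C.hK_pos K; have := C.αK_pos K; positivity
  have hB2nn : 0 ≤ B2 := Finset.sum_nonneg fun K _ => sq_nonneg _
  have hB3nn : 0 ≤ B3 := Finset.sum_nonneg fun F _ => by
    have := C.hF_pos F; have := C.αF_pos F; positivity
  -- Step 3: groupwise Cauchy–Schwarz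
  have cs1 : (∑ K : C.Elem, (Real.sqrt (w1 K) * C.normL2 K ψ) *
      (Real.sqrt (C.hK K ^ 2 / C.αK K) * C.normDiv K τ)) ≤ Real.sqrt A1 * Real.sqrt B1 := by
    have h := Real.sum_mul_le_sqrt_mul_sqrt (Finset.univ : Finset C.Elem)
      (fun K => Real.sqrt (w1 K) * C.normL2 K ψ)
      (fun K => Real.sqrt (C.hK K ^ 2 / C.αK K) * C.normDiv K τ)
    refine h.trans (le_of_eq ?_)
    congr 1
    · congr 1; refine Finset.sum_congr rfl fun K _ => ?_
      rw [mul_pow, Real.sq_sqrt (hw1nn K)]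
    · congr 1; refine Finset.sum_congr rfl fun K _ => ?_
      have := C.hK_pos K; have := C.αK_pos K
      rw [mul_pow, Real.sq_sqrt (by positivity)]
  have cs2 : (∑ K : C.Elem, C.normAG K ψ * C.normAinv K τ)
      ≤ Real.sqrt A2 * Real.sqrt B2 :=
    Real.sum_mul_le_sqrt_mul_sqrt _ _ _
  have cs3 : (∑ F : C.FaceR, (Real.sqrt (wF F) * C.normF F ψ) *
      (Real.sqrt (C.hF F / C.αF F) * C.normWn F τ)) ≤ Real.sqrt A3 * Real.sqrt B3 := by
    have h := Real.sum_mul_le_sqrt_mul_sqrt (Finset.univ : Finset C.FaceR)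
      (fun F => Real.sqrt (wF F) * C.normF F ψ)
      (fun F => Real.sqrt (C.hF F / C.αF F) * C.normWn F τ)
    refine h.trans (le_of_eq ?_)
    congr 1
    · congr 1; refine Finset.sum_congr rfl fun F _ => ?_
      rw [mul_pow, Real.sq_sqrt (hwFnn F)]
    · congr 1; refine Finset.sum_congr rfl fun F _ => ?_
      have := C.hF_pos F; have := C.αF_pos F
      rw [mul_pow, Real.sq_sqrt (by positivity)]
  -- Step 4: combine the three groups by Cauchy–Schwarz over `Fin 3`
  have combine : Real.sqrt A2 * Real.sqrt B2 + Real.sqrt A1 * Real.sqrt B1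
      + Real.sqrt A3 * Real.sqrt B3
      ≤ Real.sqrt (A1 + A2 + A3) * Real.sqrt (B1 + B2 + B3) := by
    have h := Real.sum_sqrt_mul_sqrt_le (Finset.univ : Finset (Fin 3))
      (f := ![A2, A1, A3]) (g := ![B2, B1, B3])
      (fun i => by fin_cases i <;> assumption)
      (fun i => by fin_cases i <;> assumption)
    simp only [Fin.sum_univ_three, Matrix.cons_val_zero, Matrix.cons_val_one,
      Matrix.head_cons, Matrix.cons_val_two, Matrix.tail_cons] at h
    calc Real.sqrt A2 * Real.sqrt B2 + Real.sqrt A1 * Real.sqrt B1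
        + Real.sqrt A3 * Real.sqrt B3
        ≤ Real.sqrt (A2 + A1 + A3) * Real.sqrt (B2 + B1 + B3) := h
      _ = Real.sqrt (A1 + A2 + A3) * Real.sqrt (B1 + B2 + B3) := by ring_nf
  -- identify the dag norms
  have hdag1 : C.dag1 ψ = Real.sqrt (A1 + A2 + A3) := by
    rw [DG.dag1, DG.dag1Sq, Finset.sum_add_distrib]
  have hdagd : C.dagDiv τ = Real.sqrt (B1 + B2 + B3) := by
    rw [DG.dagDiv, DG.dagDivSq, Finset.sum_add_distrib]
    congr 1; ring
  calc ‖C.pairB ψ τ‖ ≤ _ := step1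
    _ ≤ (∑ K : C.Elem, (C.normAG K ψ * C.normAinv K τ +
          (Real.sqrt (w1 K) * C.normL2 K ψ) *
            (Real.sqrt (C.hK K ^ 2 / C.αK K) * C.normDiv K τ)))
        + ∑ F : C.FaceR, (Real.sqrt (wF F) * C.normF F ψ) *
            (Real.sqrt (C.hF F / C.αF F) * C.normWn F τ) :=
      add_le_add (Finset.sum_le_sum fun K _ => add_le_add le_rfl (hwK K))
        (Finset.sum_le_sum fun F _ => hwR F)
    _ ≤ Real.sqrt A2 * Real.sqrt B2 + Real.sqrt A1 * Real.sqrt B1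
        + Real.sqrt A3 * Real.sqrt B3 := by
      rw [Finset.sum_add_distrib]
      exact add_le_add (add_le_add cs2 cs1) cs3
    _ ≤ Real.sqrt (A1 + A2 + A3) * Real.sqrt (B1 + B2 + B3) := combine
    _ = C.dag1 ψ * C.dagDiv τ := by rw [hdag1, hdagd]
end
end

section
/- (Control of the non-conformity) For all φ ∈ H¹(𝒯_h) and all ξ ∈ H¹_{Γ_D}(Ω) with A∇ξ ∈ X_{Γ_N}(div,Ω), one has |a_h(φ,ξ) + (φ, div(A∇ξ))_{𝒯_h} − (φ, A∇ξ·n)_{ℱ_h^R}| ≤ ‖φ−φ̃‖_{†,1,𝒯_h} · ‖A∇ξ − σ_h‖_{†,div,𝒯_h} for all φ̃ ∈ H¹_{Γ_D}(Ω) and all σ_h ∈ [𝒫_p(𝒯_h)]^d ∩ X_{Γ_N}(div,Ω). -/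
noncomputable section

/-- Corollary 3.2, control of the non-conformity: for all
`φ ∈ H¹(𝒯_h)` and `ξ ∈ H¹_{Γ_D}(Ω)` with `A∇ξ ∈ X_{Γ_N}(div,Ω)` (represented by `σξ`),
`|a_h(φ,ξ) + (φ, div(A∇ξ))_{𝒯_h} − (φ, A∇ξ·n)_{ℱ_h^R}|
  ≤ ‖φ−φ̃‖_{†,1,𝒯_h} ‖A∇ξ − σ_h‖_{†,div,𝒯_h}`
for all `φ̃ ∈ H¹_{Γ_D}(Ω)` and `σ_h ∈ [𝒫_p(𝒯_h)]^d ∩ X_{Γ_N}(div,Ω)`. -/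
theorem nonconformity_control (C : DG) (φ ξ : C.V) (hξ : ξ ∈ C.H10)
    (σξ : C.W) (hσξ : C.Repr ξ σξ)
    (φt : C.V) (hφt : φt ∈ C.H10) (σh : C.W) (hσh : σh ∈ C.Wh) :
    ‖C.ah φ ξ + (∑ K : C.Elem, C.pairDiv K φ σξ) - ∑ F : C.FaceR, C.pairWn F φ σξ‖ ≤
      C.dag1 (φ - φt) * C.dagDiv (σξ - σh) := by
  classical
  set u := φ - φt with hu
  set w := σξ - σh with hw
  -- Step 1: rewrite LHS as pairB u w
  have hsh : C.sh φ ξ = 0 := C.sh_conf φ ξ (Or.inr hξ)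
  have hrep := hσξ φ
  have hLHS : C.ah φ ξ + (∑ K : C.Elem, C.pairDiv K φ σξ) - ∑ F : C.FaceR, C.pairWn F φ σξ
      = C.pairB φ σξ := by
    simp only [DG.ah, hsh, hrep, DG.pairB, Finset.sum_add_distrib, add_zero]
  have h1 : C.pairB φt σξ = 0 := by
    simp only [DG.pairB, C.ibp_conf φt hφt σξ, sub_self]
  have h2 : C.pairB φ σh = 0 := by
    simp only [DG.pairB, C.ibp_disc φ σh hσh, sub_self]
  have h3 : C.pairB φt σh = 0 := by
    simp only [DG.pairB, C.ibp_disc φt σh hσh, sub_self]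
  have SG : ∀ (x x' : C.V) (y y' : C.W),
      (∑ K : C.Elem, C.pairG K (x - x') (y - y'))
        = (∑ K : C.Elem, C.pairG K x y) - (∑ K : C.Elem, C.pairG K x' y)
          - (∑ K : C.Elem, C.pairG K x y') + ∑ K : C.Elem, C.pairG K x' y' := by
    intro x x' y y'
    simp only [C.pairG_sub_left, C.pairG_sub_right, Finset.sum_sub_distrib]
    ring
  have SD : ∀ (x x' : C.V) (y y' : C.W),
      (∑ K : C.Elem, C.pairDiv K (x - x') (y - y'))
        = (∑ K : C.Elem, C.pairDiv K x y) - (∑ K : C.Elem, C.pairDiv K x' y)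
          - (∑ K : C.Elem, C.pairDiv K x y') + ∑ K : C.Elem, C.pairDiv K x' y' := by
    intro x x' y y'
    simp only [C.pairDiv_sub_left, C.pairDiv_sub_right, Finset.sum_sub_distrib]
    ring
  have SW : ∀ (x x' : C.V) (y y' : C.W),
      (∑ F : C.FaceR, C.pairWn F (x - x') (y - y'))
        = (∑ F : C.FaceR, C.pairWn F x y) - (∑ F : C.FaceR, C.pairWn F x' y)
          - (∑ F : C.FaceR, C.pairWn F x y') + ∑ F : C.FaceR, C.pairWn F x' y' := by
    intro x x' y y'
    simp only [C.pairWn_sub_left, C.pairWn_sub_right, Finset.sum_sub_distrib]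
    ring
  have expand : C.pairB u w
      = C.pairB φ σξ - C.pairB φt σξ - C.pairB φ σh + C.pairB φt σh := by
    simp only [DG.pairB, hu, hw, Finset.sum_add_distrib, SG, SD, SW]
    ring
  have hEq : C.pairB φ σξ = C.pairB u w := by
    rw [expand, h1, h2, h3]; ring
  rw [hLHS, hEq]
  -- Step 2: the bound
  set cK : C.Elem → ℝ := fun K =>
    max 1 (C.ω ^ 2 * C.hK K ^ 2 / C.thetaK K ^ 2) * (C.αK K / C.hK K ^ 2) with hcK
  set cF : C.FaceR → ℝ := fun F =>
    max 1 (C.ω * C.hF F / C.thetaF F) * (C.αF F / C.hF F) with hcF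
  have cK_pos : ∀ K, 0 < cK K := fun K => by
    simp only [hcK]
    exact mul_pos (lt_of_lt_of_le one_pos (le_max_left _ _))
      (div_pos (C.αK_pos K) (pow_pos (C.hK_pos K) 2))
  have cF_pos : ∀ F, 0 < cF F := fun F => by
    simp only [hcF]
    exact mul_pos (lt_of_lt_of_le one_pos (le_max_left _ _))
      (div_pos (C.αF_pos F) (C.hF_pos F))
  have cK_ge : ∀ K, C.αK K / C.hK K ^ 2 ≤ cK K := fun K => by
    simp only [hcK]
    exact le_mul_of_one_le_left
      (div_pos (C.αK_pos K) (pow_pos (C.hK_pos K) 2)).le (le_max_left _ _)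
  have cF_ge : ∀ F, C.αF F / C.hF F ≤ cF F := fun F => by
    simp only [hcF]
    exact le_mul_of_one_le_left (div_pos (C.αF_pos F) (C.hF_pos F)).le (le_max_left _ _)
  have key : ∀ (c L D : ℝ), 0 < c → Real.sqrt c * L * (D / Real.sqrt c) = L * D := by
    intro c L D hc
    have h : Real.sqrt c ≠ 0 := ne_of_gt (Real.sqrt_pos.2 hc)
    field_simp
  have keyB : ∀ (c d β D : ℝ), 0 < c → 0 < β → 0 < d → β / d ≤ c →
      D ^ 2 / c ≤ d / β * D ^ 2 := by
    intro c d β D hc hβ hd hle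
    have h1 : c⁻¹ ≤ (β / d)⁻¹ := inv_anti₀ (div_pos hβ hd) hle
    have h2 : (β / d)⁻¹ = d / β := by rw [inv_div]
    calc D ^ 2 / c = D ^ 2 * c⁻¹ := by rw [div_eq_mul_inv]
      _ ≤ D ^ 2 * (d / β) := by
          refine mul_le_mul_of_nonneg_left ?_ (sq_nonneg D)
          rw [← h2]; exact h1
      _ = d / β * D ^ 2 := by ring
  set a : C.Elem ⊕ C.Elem ⊕ C.FaceR → ℝ := fun i =>
    Sum.elim (fun K => Real.sqrt (cK K) * C.normL2 K u)
      (Sum.elim (fun K => C.normAG K u)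
        (fun F => Real.sqrt (cF F) * C.normF F u)) i with ha
  set b : C.Elem ⊕ C.Elem ⊕ C.FaceR → ℝ := fun i =>
    Sum.elim (fun K => C.normDiv K w / Real.sqrt (cK K))
      (Sum.elim (fun K => C.normAinv K w)
        (fun F => C.normWn F w / Real.sqrt (cF F))) i with hb
  have tri : ‖C.pairB u w‖ ≤
      (∑ K : C.Elem, (‖C.pairG K u w‖ + ‖C.pairDiv K u w‖)) + ∑ F : C.FaceR, ‖C.pairWn F u w‖ := by
    refine (norm_sub_le _ _).trans (add_le_add ?_ (norm_sum_le _ _))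
    exact (norm_sum_le _ _).trans (Finset.sum_le_sum fun K _ => norm_add_le _ _)
  have step1 : ‖C.pairB u w‖ ≤ ∑ i : C.Elem ⊕ C.Elem ⊕ C.FaceR, a i * b i := by
    refine tri.trans ?_
    have hstep : (∑ K : C.Elem, (‖C.pairG K u w‖ + ‖C.pairDiv K u w‖))
        + ∑ F : C.FaceR, ‖C.pairWn F u w‖
        ≤ (∑ K : C.Elem, (a (Sum.inr (Sum.inl K)) * b (Sum.inr (Sum.inl K))
              + a (Sum.inl K) * b (Sum.inl K)))
          + ∑ F : C.FaceR, a (Sum.inr (Sum.inr F)) * b (Sum.inr (Sum.inr F)) := by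
      refine add_le_add (Finset.sum_le_sum fun K _ => ?_) (Finset.sum_le_sum fun F _ => ?_)
      · simp only [ha, hb, Sum.elim_inl, Sum.elim_inr]
        rw [key (cK K) _ _ (cK_pos K)]
        exact add_le_add (C.csG K u w) (C.csDiv K u w)
      · simp only [ha, hb, Sum.elim_inr]
        rw [key (cF F) _ _ (cF_pos F)]
        exact C.csWn F u w
    refine hstep.trans (le_of_eq ?_)
    rw [Fintype.sum_sum_type, Fintype.sum_sum_type, Finset.sum_add_distrib]
    ring
  have step2 : ∑ i : C.Elem ⊕ C.Elem ⊕ C.FaceR, a i * b i ≤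
      Real.sqrt (∑ i, a i ^ 2) * Real.sqrt (∑ i, b i ^ 2) :=
    Real.sum_mul_le_sqrt_mul_sqrt _ a b
  have haSq : (∑ i, a i ^ 2) = C.dag1Sq u := by
    rw [Fintype.sum_sum_type, Fintype.sum_sum_type, DG.dag1Sq]
    simp only [ha, Sum.elim_inl, Sum.elim_inr]
    have e1 : (∑ K : C.Elem, (Real.sqrt (cK K) * C.normL2 K u) ^ 2)
        = ∑ K : C.Elem, cK K * C.normL2 K u ^ 2 :=
      Finset.sum_congr rfl fun K _ => by rw [mul_pow, Real.sq_sqrt (cK_pos K).le]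
    have e3 : (∑ F : C.FaceR, (Real.sqrt (cF F) * C.normF F u) ^ 2)
        = ∑ F : C.FaceR, cF F * C.normF F u ^ 2 :=
      Finset.sum_congr rfl fun F _ => by rw [mul_pow, Real.sq_sqrt (cF_pos F).le]
    rw [e1, e3, Finset.sum_add_distrib]
    simp only [hcK, hcF]
    ring
  have hbSq : (∑ i, b i ^ 2) ≤ C.dagDivSq w := by
    rw [Fintype.sum_sum_type, Fintype.sum_sum_type, DG.dagDivSq]
    simp only [hb, Sum.elim_inl, Sum.elim_inr]
    rw [Finset.sum_add_distrib]
    have b1 : (∑ K : C.Elem, (C.normDiv K w / Real.sqrt (cK K)) ^ 2)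
        ≤ ∑ K : C.Elem, C.hK K ^ 2 / C.αK K * C.normDiv K w ^ 2 := by
      refine Finset.sum_le_sum fun K _ => ?_
      rw [div_pow, Real.sq_sqrt (cK_pos K).le]
      exact keyB _ _ _ _ (cK_pos K) (C.αK_pos K) (pow_pos (C.hK_pos K) 2) (cK_ge K)
    have b3 : (∑ F : C.FaceR, (C.normWn F w / Real.sqrt (cF F)) ^ 2)
        ≤ ∑ F : C.FaceR, C.hF F / C.αF F * C.normWn F w ^ 2 := by
      refine Finset.sum_le_sum fun F _ => ?_
      rw [div_pow, Real.sq_sqrt (cF_pos F).le]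
      exact keyB _ _ _ _ (cF_pos F) (C.αF_pos F) (C.hF_pos F) (cF_ge F)
    linarith
  refine le_trans step1 (le_trans step2 ?_)
  rw [DG.dag1, DG.dagDiv, haSq]
  exact mul_le_mul_of_nonneg_left (Real.sqrt_le_sqrt hbSq) (Real.sqrt_nonneg _)
end
end

section
/- (Continuity) For φ, v ∈ H¹(𝒯_h), if at least one of φ, v belongs to H¹_{Γ_D}(Ω), then |b_h(φ,v)| ≤ |||φ|||_{ω,𝒯_h} · |||v|||_{ω,𝒯_h}. -/
noncomputable section

private lemma dg_sqrt_mul_mul (c a b : ℝ) (hc : 0 ≤ c) :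
    (Real.sqrt c * a) * (Real.sqrt c * b) = c * (a * b) := by
  have h : (Real.sqrt c * a) * (Real.sqrt c * b) = (Real.sqrt c * Real.sqrt c) * (a * b) := by
    ring
  rw [h, Real.mul_self_sqrt hc]

private lemma dg_sqrt_mul_sq (c a : ℝ) (hc : 0 ≤ c) :
    (Real.sqrt c * a) ^ 2 = c * a ^ 2 := by
  rw [mul_pow, Real.sq_sqrt hc]

/-- continuity, eq. (2.11): for `φ, v ∈ H¹(𝒯_h)`, if at least one of
them belongs to `H¹_{Γ_D}(Ω)`, then `|b_h(φ,v)| ≤ |||φ|||_{ω,𝒯_h} |||v|||_{ω,𝒯_h}`. -/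
theorem bh_continuity (C : DG) (φ v : C.V) (h : φ ∈ C.H10 ∨ v ∈ C.H10) :
    ‖C.bh φ v‖ ≤ C.enorm φ * C.enorm v := by
  classical
  have hsh : C.sh φ v = 0 := C.sh_conf φ v h
  have hbh : C.bh φ v = -((C.ω ^ 2 : ℝ) : ℂ) * C.muPair φ v
      - Complex.I * (C.ω : ℂ) * C.gamPair φ v + C.agPair φ v := by
    simp [DG.bh, DG.ah, hsh]
  have hωnn : (0:ℝ) ≤ C.ω := C.ω_pos.le
  set f : C.Elem ⊕ C.Elem ⊕ C.FaceR → ℝ := fun i =>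
    Sum.rec (fun K => Real.sqrt (C.μK K) * (C.ω * C.normL2 K φ))
      (Sum.rec (fun K => C.normAG K φ)
        (fun F => Real.sqrt (C.ω * C.γF F) * C.normF F φ)) i with hf
  set g : C.Elem ⊕ C.Elem ⊕ C.FaceR → ℝ := fun i =>
    Sum.rec (fun K => Real.sqrt (C.μK K) * (C.ω * C.normL2 K v))
      (Sum.rec (fun K => C.normAG K v)
        (fun F => Real.sqrt (C.ω * C.γF F) * C.normF F v)) i with hg
  have hsumf : ∀ u : C.V, (∑ i, (fun i =>
      (Sum.rec (fun K => Real.sqrt (C.μK K) * (C.ω * C.normL2 K u))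
        (Sum.rec (fun K => C.normAG K u)
          (fun F => Real.sqrt (C.ω * C.γF F) * C.normF F u)) i : ℝ)) i ^ 2)
      = C.enormSq u := by
    intro u
    rw [Fintype.sum_sum_type, Fintype.sum_sum_type]
    dsimp only
    unfold DG.enormSq
    rw [Finset.sum_add_distrib]
    have k1 : ∀ K : C.Elem, (Real.sqrt (C.μK K) * (C.ω * C.normL2 K u)) ^ 2
        = C.ω ^ 2 * C.μK K * C.normL2 K u ^ 2 := by
      intro K
      rw [dg_sqrt_mul_sq _ _ (C.μK_pos K).le]
      ring
    have f1 : ∀ F : C.FaceR, (Real.sqrt (C.ω * C.γF F) * C.normF F u) ^ 2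
        = C.ω * C.γF F * C.normF F u ^ 2 := by
      intro F
      rw [dg_sqrt_mul_sq _ _ (by have := C.γF_pos F; positivity)]
    simp only [k1, f1]
    ring
  have hsF : ∑ i, f i ^ 2 = C.enormSq φ := hsumf φ
  have hsG : ∑ i, g i ^ 2 = C.enormSq v := hsumf v
  have hbound : ‖C.bh φ v‖ ≤ ∑ i, f i * g i := by
    rw [hbh]
    have h1 : ‖-((C.ω ^ 2 : ℝ) : ℂ) * C.muPair φ v‖
        ≤ ∑ K : C.Elem, C.μK K * ((C.ω * C.normL2 K φ) * (C.ω * C.normL2 K v)) := by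
      rw [norm_mul, norm_neg, Complex.norm_real, Real.norm_of_nonneg (by positivity)]
      calc C.ω ^ 2 * ‖C.muPair φ v‖
          ≤ C.ω ^ 2 * ∑ K : C.Elem, C.μK K * (C.normL2 K φ * C.normL2 K v) := by
            refine mul_le_mul_of_nonneg_left ?_ (by positivity)
            exact (norm_sum_le _ _).trans (Finset.sum_le_sum fun K _ => C.csMu K φ v)
        _ = ∑ K : C.Elem, C.μK K * ((C.ω * C.normL2 K φ) * (C.ω * C.normL2 K v)) := by
            rw [Finset.mul_sum]; refine Finset.sum_congr rfl fun K _ => by ring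
    have h2 : ‖Complex.I * (C.ω : ℂ) * C.gamPair φ v‖
        ≤ ∑ F : C.FaceR, C.ω * (C.γF F * (C.normF F φ * C.normF F v)) := by
      rw [norm_mul, norm_mul, Complex.norm_I, one_mul, Complex.norm_real,
        Real.norm_of_nonneg hωnn, ← Finset.mul_sum]
      refine mul_le_mul_of_nonneg_left ?_ hωnn
      exact (norm_sum_le _ _).trans (Finset.sum_le_sum fun F _ => C.csGam F φ v)
    have h3 : ‖C.agPair φ v‖ ≤ ∑ K : C.Elem, C.normAG K φ * C.normAG K v :=
      (norm_sum_le _ _).trans (Finset.sum_le_sum fun K _ => C.csAG K φ v)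
    have htot : ‖-((C.ω ^ 2 : ℝ) : ℂ) * C.muPair φ v
        - Complex.I * (C.ω : ℂ) * C.gamPair φ v + C.agPair φ v‖
        ≤ ‖-((C.ω ^ 2 : ℝ) : ℂ) * C.muPair φ v‖ + ‖Complex.I * (C.ω : ℂ) * C.gamPair φ v‖
          + ‖C.agPair φ v‖ := by
      refine (norm_add_le _ _).trans ?_
      gcongr
      exact norm_sub_le _ _
    refine htot.trans ?_
    rw [hf, hg, Fintype.sum_sum_type, Fintype.sum_sum_type]
    dsimp only
    have e1 : ∀ K : C.Elem,
        (Real.sqrt (C.μK K) * (C.ω * C.normL2 K φ)) * (Real.sqrt (C.μK K) * (C.ω * C.normL2 K v))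
        = C.μK K * ((C.ω * C.normL2 K φ) * (C.ω * C.normL2 K v)) :=
      fun K => dg_sqrt_mul_mul _ _ _ (C.μK_pos K).le
    have e3 : ∀ F : C.FaceR,
        (Real.sqrt (C.ω * C.γF F) * C.normF F φ) * (Real.sqrt (C.ω * C.γF F) * C.normF F v)
        = C.ω * (C.γF F * (C.normF F φ * C.normF F v)) := by
      intro F
      rw [dg_sqrt_mul_mul _ _ _ (by have := C.γF_pos F; positivity)]
      ring
    simp only [e1, e3]
    linarith
  refine hbound.trans ?_
  have hφnn : (0:ℝ) ≤ C.enormSq φ := by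
    rw [← hsF]; exact Finset.sum_nonneg fun i _ => sq_nonneg _
  have hfg : (0:ℝ) ≤ ∑ i, f i * g i := by
    refine Finset.sum_nonneg fun i _ => ?_
    rcases i with K | K | F
    · exact mul_nonneg (mul_nonneg (Real.sqrt_nonneg _)
        (mul_nonneg hωnn (C.normL2_nonneg K φ)))
        (mul_nonneg (Real.sqrt_nonneg _) (mul_nonneg hωnn (C.normL2_nonneg K v)))
    · exact mul_nonneg (C.normAG_nonneg K φ) (C.normAG_nonneg K v)
    · exact mul_nonneg (mul_nonneg (Real.sqrt_nonneg _) (C.normF_nonneg F φ))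
        (mul_nonneg (Real.sqrt_nonneg _) (C.normF_nonneg F v))
  have hcs := Finset.sum_mul_sq_le_sq_mul_sq Finset.univ f g
  rw [hsF, hsG] at hcs
  have hle := Real.sqrt_le_sqrt hcs
  rw [Real.sqrt_sq hfg, Real.sqrt_mul hφnn] at hle
  exact hle
end
end

section
/- (Pythagorean splitting of the error) Let ũ ∈ H¹_{Γ_D}(Ω) be the unique function with b_h^+(ũ − u_h, v) = 0 for all v ∈ H¹_{Γ_D}(Ω), where b_h^+(φ,v) := ω²(μφ,v)_{𝒯_h} + ω(γφ,v)_{ℱ_h^R} + (A𝔊(φ),𝔊(v))_{𝒯_h}. Then the broken energy error splits exactly as |||u−u_h|||²_{ω,𝒯_h} = |||u_h−ũ|||²_{ω,𝒯_h} + |||u−ũ|||²_{ω,𝒯_h}, and moreover |||u_h−ũ|||_{ω,𝒯_h} ≤ ‖u_h − π^g u_h‖_{†,1,𝒯_h}. -/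
noncomputable section

namespace DG

variable (C : DG)

lemma muPair_sub_left (u v r : C.V) : C.muPair (u - v) r = C.muPair u r - C.muPair v r := by
  simp [muPair, C.pairMu_sub_left, Finset.sum_sub_distrib]

lemma muPair_sub_right (u v r : C.V) : C.muPair u (v - r) = C.muPair u v - C.muPair u r := by
  simp [muPair, C.pairMu_sub_right, Finset.sum_sub_distrib]

lemma gamPair_sub_left (u v r : C.V) : C.gamPair (u - v) r = C.gamPair u r - C.gamPair v r := by
  simp [gamPair, C.pairGam_sub_left, Finset.sum_sub_distrib]

lemma gamPair_sub_right (u v r : C.V) : C.gamPair u (v - r) = C.gamPair u v - C.gamPair u r := by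
  simp [gamPair, C.pairGam_sub_right, Finset.sum_sub_distrib]

lemma agPair_sub_left (u v r : C.V) : C.agPair (u - v) r = C.agPair u r - C.agPair v r := by
  simp [agPair, C.pairAG_sub_left, Finset.sum_sub_distrib]

lemma agPair_sub_right (u v r : C.V) : C.agPair u (v - r) = C.agPair u v - C.agPair u r := by
  simp [agPair, C.pairAG_sub_right, Finset.sum_sub_distrib]

lemma bhp_sub_left (u v r : C.V) : C.bhp (u - v) r = C.bhp u r - C.bhp v r := by
  simp only [bhp, C.muPair_sub_left, C.gamPair_sub_left, C.agPair_sub_left]; ring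

lemma bhp_sub_right (u v r : C.V) : C.bhp u (v - r) = C.bhp u v - C.bhp u r := by
  simp only [bhp, C.muPair_sub_right, C.gamPair_sub_right, C.agPair_sub_right]; ring

lemma bhp_conj (φ v : C.V) : C.bhp φ v = starRingEnd ℂ (C.bhp v φ) := by
  have e1 : C.muPair φ v = starRingEnd ℂ (C.muPair v φ) := by
    simp only [muPair, map_sum]
    exact Finset.sum_congr rfl fun K _ => C.pairMu_symm K φ v
  have e2 : C.gamPair φ v = starRingEnd ℂ (C.gamPair v φ) := by
    simp only [gamPair, map_sum]
    exact Finset.sum_congr rfl fun F _ => C.pairGam_symm F φ v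
  have e3 : C.agPair φ v = starRingEnd ℂ (C.agPair v φ) := by
    simp only [agPair, map_sum]
    exact Finset.sum_congr rfl fun K _ => C.pairAG_symm K φ v
  simp only [bhp, e1, e2, e3, map_add, map_mul, Complex.conj_ofReal]

lemma bhp_self (v : C.V) : C.bhp v v = ((C.enormSq v : ℝ) : ℂ) := by
  simp only [bhp, muPair, gamPair, agPair, enormSq, C.pairMu_self, C.pairGam_self,
    C.pairAG_self]
  push_cast
  rw [Finset.sum_add_distrib, Finset.mul_sum, Finset.mul_sum]
  simp only [mul_assoc]
  ring

lemma enormSq_nonneg (v : C.V) : 0 ≤ C.enormSq v := by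
  have h1 : ∀ K : C.Elem, (0:ℝ) ≤ C.ω ^ 2 * C.μK K * C.normL2 K v ^ 2 + C.normAG K v ^ 2 := by
    intro K
    exact add_nonneg (mul_nonneg (mul_nonneg (sq_nonneg _) (C.μK_pos K).le) (sq_nonneg _))
      (sq_nonneg _)
  have h2 : ∀ F : C.FaceR, (0:ℝ) ≤ C.ω * C.γF F * C.normF F v ^ 2 := by
    intro F
    exact mul_nonneg (mul_nonneg C.ω_pos.le (C.γF_pos F).le) (sq_nonneg _)
  exact add_nonneg (Finset.sum_nonneg fun K _ => h1 K) (Finset.sum_nonneg fun F _ => h2 F)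

/-- Pythagoras for the `b_h^+` inner product. -/
lemma enormSq_pyth (m t : C.V) (h1 : C.bhp m t = 0) (h2 : C.bhp t m = 0) :
    C.enormSq (m - t) = C.enormSq m + C.enormSq t := by
  have key : C.bhp (m - t) (m - t) = C.bhp m m + C.bhp t t := by
    rw [C.bhp_sub_left, C.bhp_sub_right, C.bhp_sub_right, h1, h2]
    ring
  have := key
  rw [C.bhp_self, C.bhp_self, C.bhp_self, ← Complex.ofReal_add] at this
  exact_mod_cast this

lemma enormSq_le_dag1Sq (v : C.V) : C.enormSq v ≤ C.dag1Sq v := by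
  unfold enormSq dag1Sq
  apply add_le_add
  · apply Finset.sum_le_sum
    intro K _
    apply add_le_add_left
    have hθ : C.thetaK K ^ 2 = C.αK K / C.μK K := by
      rw [thetaK, Real.sq_sqrt (le_of_lt (div_pos (C.αK_pos K) (C.μK_pos K)))]
    have ha := (C.αK_pos K).ne'
    have hm := (C.μK_pos K).ne'
    have hh := (C.hK_pos K).ne'
    have hmu : C.ω ^ 2 * C.μK K
        = C.ω ^ 2 * C.hK K ^ 2 / C.thetaK K ^ 2 * (C.αK K / C.hK K ^ 2) := by
      rw [hθ]
      field_simp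
    have key : C.ω ^ 2 * C.μK K
        ≤ max 1 (C.ω ^ 2 * C.hK K ^ 2 / C.thetaK K ^ 2) * (C.αK K / C.hK K ^ 2) := by
      rw [hmu]
      exact mul_le_mul_of_nonneg_right (le_max_right _ _)
        (div_pos (C.αK_pos K) (pow_pos (C.hK_pos K) 2)).le
    exact mul_le_mul_of_nonneg_right key (sq_nonneg _)
  · apply Finset.sum_le_sum
    intro F _
    have ha := (C.αF_pos F).ne'
    have hg := (C.γF_pos F).ne'
    have hh := (C.hF_pos F).ne'
    have hgam : C.ω * C.γF F = C.ω * C.hF F / C.thetaF F * (C.αF F / C.hF F) := by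
      rw [thetaF]
      field_simp
    have key : C.ω * C.γF F
        ≤ max 1 (C.ω * C.hF F / C.thetaF F) * (C.αF F / C.hF F) := by
      rw [hgam]
      exact mul_le_mul_of_nonneg_right (le_max_right _ _)
        (div_pos (C.αF_pos F) (C.hF_pos F)).le
    exact mul_le_mul_of_nonneg_right key (sq_nonneg _)

end DG

/-- Pythagorean splitting of the error: let `ũ ∈ H¹_{Γ_D}(Ω)` be the
`b_h^+`-orthogonal projection of the IPDG solution `u_h` onto `H¹_{Γ_D}(Ω)`, i.e.
`b_h^+(ũ − u_h, v) = 0` for all `v ∈ H¹_{Γ_D}(Ω)`, where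
`b_h^+(φ,v) = ω²(μφ,v)_{𝒯_h} + ω(γφ,v)_{ℱ_h^R} + (A𝔊(φ),𝔊(v))_{𝒯_h}`.
Then the broken energy error splits exactly as
`|||u−u_h|||²_{ω,𝒯_h} = |||u_h−ũ|||²_{ω,𝒯_h} + |||u−ũ|||²_{ω,𝒯_h}`, and moreover
`|||u_h−ũ|||_{ω,𝒯_h} ≤ ‖u_h − π^g u_h‖_{†,1,𝒯_h}`. -/
theorem pythagorean_splitting (C : DG) (u uh ut : C.V)
    (hu : C.IsExactSol u) (huh : C.IsDiscreteSol uh)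
    (hut : ut ∈ C.H10) (hproj : ∀ v ∈ C.H10, C.bhp (ut - uh) v = 0)
    (πg : C.V → C.V) (hπg : C.IsPig πg) :
    C.enormSq (u - uh) = C.enormSq (uh - ut) + C.enormSq (u - ut) ∧
    C.enorm (uh - ut) ≤ C.dag1 (uh - πg uh) := by
  have horth : ∀ v ∈ C.H10, C.bhp (uh - ut) v = 0 := by
    intro v hv
    have h := hproj v hv
    rw [C.bhp_sub_left] at h
    rw [C.bhp_sub_left]
    linear_combination -h
  have horth' : ∀ v ∈ C.H10, C.bhp v (uh - ut) = 0 := by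
    intro v hv
    rw [C.bhp_conj, horth v hv, map_zero]
  have he : u - ut ∈ C.H10 := Submodule.sub_mem _ hu.1 hut
  constructor
  · have split1 := C.enormSq_pyth (u - ut) (uh - ut) (horth' _ he) (horth _ he)
    have hdiff : (u - ut) - (uh - ut) = u - uh := by abel
    rw [hdiff] at split1
    linarith
  · have hsH := (hπg uh).1
    have ht : πg uh - ut ∈ C.H10 := Submodule.sub_mem _ hsH hut
    have split2 := C.enormSq_pyth (uh - ut) (πg uh - ut) (horth _ ht) (horth' _ ht)
    have hdiff2 : (uh - ut) - (πg uh - ut) = uh - πg uh := by abel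
    rw [hdiff2] at split2
    have h1 : C.enormSq (uh - ut) ≤ C.dag1Sq (uh - πg uh) := by
      have h0 := C.enormSq_nonneg (πg uh - ut)
      have h2 := C.enormSq_le_dag1Sq (uh - πg uh)
      linarith
    exact Real.sqrt_le_sqrt h1
end
end
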